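/- arXiv:1602.08790 — 3 statements merged into one kernel-verified Lean document; each statement's English description precedes it below -/
import Mathlib

section
/- With the setup of a product operator $K$ with factor bounds $\|K_j g\|_{L^{r_j}}\le C_j\|g\|_{L^{p_j}}$: if $p_1\le r_2$ (no other conditions needed beyond positivity of all exponents), then $\|Kf\|_{L^{(r_1,r_2)}_{\mu_1\times\mu_2}}\le C_1C_2\|f\|_{L^{(p_2,p_1)}_{\lambda_2\times\lambda_1}}$ for all nonnegative measurable $f$ on $T_1\times T_2$. -/
open MeasureTheory ENNReal


open Function in
lemma minkowski_lintegral {X T : Type*} [MeasurableSpace X] [MeasurableSpace T]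
    (μ : Measure X) (lam : Measure T) [SigmaFinite μ] [SFinite lam]
    (F : X → T → ℝ≥0∞) (hF : Measurable (uncurry F)) {s : ℝ} (hs : 1 ≤ s) :
    (∫⁻ x, (∫⁻ t, F x t ∂lam) ^ s ∂μ) ^ (1 / s)
      ≤ ∫⁻ t, (∫⁻ x, F x t ^ s ∂μ) ^ (1 / s) ∂lam := by
  have hs0 : (0:ℝ) < s := lt_of_lt_of_le one_pos hs
  rcases eq_or_lt_of_le hs with h1 | h1
  · subst h1
    simp only [ENNReal.rpow_one, one_div_one]
    exact le_of_eq (lintegral_lintegral_swap hF.aemeasurable)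
  have hG : Measurable fun x => ∫⁻ t, F x t ∂lam := hF.lintegral_prod_right'
  set G : X → ℝ≥0∞ := fun x => ∫⁻ t, F x t ∂lam with hGdef
  set R : ℝ≥0∞ := ∫⁻ t, (∫⁻ x, F x t ^ s ∂μ) ^ (1 / s) ∂lam with hRdef
  set q : ℝ := s / (s - 1) with hqdef
  have hs1 : (0:ℝ) < s - 1 := by linarith
  have hq : q.HolderConjugate s :=
    ((Real.holderConjugate_iff_eq_conjExponent h1).2 hqdef).symm
  have hq1s : 1 / q + 1 / s = 1 := by
    have := hq.inv_add_inv_eq_one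
    simpa [one_div] using this
  have hqs : (s - 1) * q = s := by rw [hqdef]; field_simp
  set A : ℕ → Set X := spanningSets μ with hA
  set Gn : ℕ → X → ℝ≥0∞ := fun n x => (A n).indicator (fun x => min (G x) n) x with hGn_def
  have hGn_meas : ∀ n, Measurable (Gn n) := fun n =>
    (hG.min measurable_const).indicator (measurableSet_spanningSets μ n)
  have hGn_le_G : ∀ n x, Gn n x ≤ G x := by
    intro n x
    rw [hGn_def]
    simp only [Set.indicator]
    split_ifs
    · exact min_le_left _ _
    · exact zero_le
  have hGn_le_n : ∀ n x, Gn n x ≤ (n : ℝ≥0∞) := by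
    intro n x
    rw [hGn_def]
    simp only [Set.indicator]
    split_ifs
    · exact min_le_right _ _
    · exact zero_le
  have hGn_ne_top : ∀ n x, Gn n x ≠ ∞ := fun n x =>
    ne_top_of_le_ne_top (natCast_ne_top n) (hGn_le_n n x)
  set I : ℕ → ℝ≥0∞ := fun n => ∫⁻ x, Gn n x ^ s ∂μ with hIdef
  have hI_ne_top : ∀ n, I n ≠ ∞ := by
    intro n
    have hle : I n ≤ ∫⁻ x, (A n).indicator (fun _ => (n:ℝ≥0∞) ^ s) x ∂μ := by
      apply lintegral_mono
      intro x
      rw [hGn_def]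
      simp only [Set.indicator]
      split_ifs
      · exact ENNReal.rpow_le_rpow (min_le_right _ _) hs0.le
      · rw [ENNReal.zero_rpow_of_pos hs0]
    rw [lintegral_indicator (measurableSet_spanningSets μ n)] at hle
    simp only [lintegral_const, Measure.restrict_apply_univ] at hle
    refine ne_top_of_le_ne_top ?_ hle
    exact ENNReal.mul_ne_top
      (ENNReal.rpow_ne_top_of_nonneg hs0.le (natCast_ne_top n))
      (measure_spanningSets_lt_top μ n).ne
  have key : ∀ n, I n ≤ I n ^ (1 / q) * R := by
    intro n
    have meas_mul : Measurable (uncurry fun x t => Gn n x ^ (s - 1) * F x t) :=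
      (((hGn_meas n).comp measurable_fst).pow_const (s-1)).mul hF
    calc I n ≤ ∫⁻ x, Gn n x ^ (s - 1) * G x ∂μ := by
          apply lintegral_mono
          intro x
          rcases eq_or_ne (Gn n x) 0 with h | h
          · simp [h, ENNReal.zero_rpow_of_pos hs0, ENNReal.zero_rpow_of_pos hs1]
          · calc Gn n x ^ s = Gn n x ^ (s - 1) * Gn n x := by
                  have h2 := ENNReal.rpow_add (s-1) 1 h (hGn_ne_top n x)
                  rw [ENNReal.rpow_one] at h2
                  rw [show s - 1 + 1 = s by ring] at h2
                  exact h2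
              _ ≤ _ := mul_le_mul_right (hGn_le_G n x) _
      _ = ∫⁻ x, ∫⁻ t, Gn n x ^ (s - 1) * F x t ∂lam ∂μ := by
          refine lintegral_congr fun x => ?_
          rw [lintegral_const_mul _ hF.of_uncurry_left]
      _ = ∫⁻ t, ∫⁻ x, Gn n x ^ (s - 1) * F x t ∂μ ∂lam :=
          lintegral_lintegral_swap meas_mul.aemeasurable
      _ ≤ ∫⁻ t, (∫⁻ x, (Gn n x ^ (s - 1)) ^ q ∂μ) ^ (1/q) * (∫⁻ x, F x t ^ s ∂μ) ^ (1/s) ∂lam := by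
          refine lintegral_mono fun t => ?_
          exact ENNReal.lintegral_mul_le_Lp_mul_Lq μ hq
            (((hGn_meas n).pow_const _).aemeasurable) (hF.comp measurable_prodMk_right).aemeasurable
      _ = I n ^ (1/q) * R := by
          have : ∀ x, (Gn n x ^ (s - 1)) ^ q = Gn n x ^ s := by
            intro x
            rw [← ENNReal.rpow_mul, hqs]
          simp_rw [this]
          have hmeas2 : Measurable fun t => (∫⁻ x, F x t ^ s ∂μ) ^ (1/s) := by
            apply Measurable.pow_const
            exact Measurable.lintegral_prod_left (hF.pow_const s)
          rw [lintegral_const_mul _ hmeas2]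
  have key2 : ∀ n, I n ^ (1 / s) ≤ R := by
    intro n
    rcases eq_or_ne (I n) 0 with h | h
    · rw [h, ENNReal.zero_rpow_of_pos (by positivity)]
      exact zero_le
    have h1q : I n ^ (1/q) ≠ 0 := by
      simp [ENNReal.rpow_eq_zero_iff, h, hI_ne_top n]
    have h2q : I n ^ (1/q) ≠ ∞ := by
      simp [ENNReal.rpow_eq_top_iff, h, hI_ne_top n]
    have : I n ^ (1/q) * I n ^ (1/s) ≤ I n ^ (1/q) * R := by
      calc I n ^ (1/q) * I n ^ (1/s) = I n := by
            rw [← ENNReal.rpow_add _ _ h (hI_ne_top n), hq1s, ENNReal.rpow_one]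
        _ ≤ I n ^ (1/q) * R := key n
    exact (ENNReal.mul_le_mul_iff_right h1q h2q).1 this
  -- monotone convergence
  have hGn_mono : Monotone fun n => Gn n := by
    intro m n hmn x
    simp only [hGn_def, Set.indicator]
    split_ifs with h1' h2'
    · exact min_le_min le_rfl (by exact_mod_cast Nat.cast_le.2 hmn)
    · exact absurd (monotone_spanningSets μ hmn h1') h2'
    · exact zero_le
    · exact le_rfl
  have hsup : ∀ x, ⨆ n, Gn n x ^ s = G x ^ s := by
    intro x
    obtain ⟨n0, hn0⟩ : ∃ n, x ∈ A n := by
      have := iUnion_spanningSets μ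
      have hx : x ∈ ⋃ n, spanningSets μ n := by rw [this]; trivial
      exact Set.mem_iUnion.1 hx
    apply le_antisymm
    · exact iSup_le fun n => ENNReal.rpow_le_rpow (hGn_le_G n x) hs0.le
    rcases eq_or_ne (G x) ∞ with hGx | hGx
    · rw [hGx, ENNReal.top_rpow_of_pos hs0]
      rw [top_le_iff, eq_top_iff, ← ENNReal.iSup_natCast]
      refine iSup_le fun n => ?_
      have h1 : (n : ℝ≥0∞) ≤ Gn (max n0 n) x := by
        simp only [hGn_def, Set.indicator, hGx]
        rw [if_pos (monotone_spanningSets μ (le_max_left n0 n) hn0)]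
        simp only [min_eq_right (le_top : ((max n0 n : ℕ) : ℝ≥0∞) ≤ ⊤)]
        exact_mod_cast Nat.cast_le.2 (le_max_right n0 n)
      have h2 : (n : ℝ≥0∞) ≤ Gn (max n0 n) x ^ s := by
        rcases Nat.eq_zero_or_pos n with hn | hn
        · simp [hn]
        · have hb : (1:ℝ≥0∞) ≤ Gn (max n0 n) x :=
            le_trans (by exact_mod_cast hn) h1
          calc (n:ℝ≥0∞) ≤ Gn (max n0 n) x := h1
            _ = Gn (max n0 n) x ^ (1:ℝ) := (ENNReal.rpow_one _).symm
            _ ≤ Gn (max n0 n) x ^ s := ENNReal.rpow_le_rpow_of_exponent_le hb hs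
      exact le_trans h2 (le_iSup (fun n => Gn n x ^ s) (max n0 n))
    · obtain ⟨m, hm⟩ := ENNReal.exists_nat_gt hGx
      have : Gn (max n0 m) x = G x := by
        simp only [hGn_def, Set.indicator]
        rw [if_pos (monotone_spanningSets μ (le_max_left n0 m) hn0)]
        apply min_eq_left
        calc G x ≤ (m : ℝ≥0∞) := hm.le
          _ ≤ ((max n0 m : ℕ) : ℝ≥0∞) := by exact_mod_cast Nat.cast_le.2 (le_max_right n0 m)
      calc G x ^ s = Gn (max n0 m) x ^ s := by rw [this]
        _ ≤ ⨆ n, Gn n x ^ s := le_iSup (fun n => Gn n x ^ s) _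
  have hMCT : ∫⁻ x, G x ^ s ∂μ = ⨆ n, I n := by
    rw [hIdef]
    simp_rw [← hsup]
    exact lintegral_iSup (fun n => (hGn_meas n).pow_const s)
      (fun m n hmn x => ENNReal.rpow_le_rpow (hGn_mono hmn x) hs0.le)
  rw [hMCT]
  have hfin : (⨆ n, I n) ≤ R ^ s := by
    refine iSup_le fun n => ?_
    calc I n = (I n ^ (1/s)) ^ s := by
          rw [← ENNReal.rpow_mul, one_div_mul_cancel hs0.ne', ENNReal.rpow_one]
      _ ≤ R ^ s := ENNReal.rpow_le_rpow (key2 n) hs0.le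
  calc (⨆ n, I n) ^ (1/s) ≤ (R ^ s) ^ (1/s) := ENNReal.rpow_le_rpow hfin (by positivity)
    _ = R := by rw [← ENNReal.rpow_mul, mul_one_div_cancel hs0.ne', ENNReal.rpow_one]

theorem product_operator_permuted_case_p1_le_r2
    {T1 T2 X1 X2 : Type*} [MeasurableSpace T1] [MeasurableSpace T2]
    [MeasurableSpace X1] [MeasurableSpace X2]
    (lam1 : Measure T1) (lam2 : Measure T2) (mu1 : Measure X1) (mu2 : Measure X2)
    [SigmaFinite lam1] [SigmaFinite lam2] [SigmaFinite mu1] [SigmaFinite mu2]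
    (k1 : X1 → T1 → ℝ≥0∞) (k2 : X2 → T2 → ℝ≥0∞)
    (hk1 : Measurable fun p : X1 × T1 => k1 p.1 p.2)
    (hk2 : Measurable fun p : X2 × T2 => k2 p.1 p.2)
    (p1 p2 r1 r2 : ℝ) (C1 C2 : ℝ≥0∞)
    (hp1 : 0 < p1) (hp2 : 0 < p2) (hr1 : 0 < r1) (hr2 : 0 < r2)
    (hpr : p1 ≤ r2)
    (hK1 : ∀ g : T1 → ℝ≥0∞, Measurable g →
      (∫⁻ x, (∫⁻ t, k1 x t * g t ∂lam1) ^ r1 ∂mu1) ^ (1 / r1)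
        ≤ C1 * (∫⁻ t, g t ^ p1 ∂lam1) ^ (1 / p1))
    (hK2 : ∀ g : T2 → ℝ≥0∞, Measurable g →
      (∫⁻ x, (∫⁻ t, k2 x t * g t ∂lam2) ^ r2 ∂mu2) ^ (1 / r2)
        ≤ C2 * (∫⁻ t, g t ^ p2 ∂lam2) ^ (1 / p2))
    (f : T1 × T2 → ℝ≥0∞) (hf : Measurable f) :
    (∫⁻ x2, (∫⁻ x1,
        (∫⁻ t, k1 x1 t.1 * k2 x2 t.2 * f t ∂(lam1.prod lam2)) ^ r1 ∂mu1) ^ (r2 / r1)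
      ∂mu2) ^ (1 / r2)
      ≤ C1 * C2 *
        (∫⁻ t1, (∫⁻ t2, f (t1, t2) ^ p2 ∂lam2) ^ (p1 / p2) ∂lam1) ^ (1 / p1) := by
  set s : ℝ := r2 / p1 with hsdef
  have hs : 1 ≤ s := (one_le_div hp1).2 hpr
  have hs0 : (0:ℝ) < s := lt_of_lt_of_le one_pos hs
  set g : X2 → T1 → ℝ≥0∞ := fun x2 t1 => ∫⁻ t2, k2 x2 t2 * f (t1, t2) ∂lam2 with hgdef
  have hg_un : Measurable (Function.uncurry g) := by
    apply Measurable.lintegral_prod_right'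
      (f := fun q : (X2 × T1) × T2 => k2 q.1.1 q.2 * f (q.1.2, q.2))
    exact (hk2.comp (measurable_fst.fst.prodMk measurable_snd)).mul
      (hf.comp (measurable_fst.snd.prodMk measurable_snd))
  have hg_left : ∀ x2, Measurable (g x2) := fun x2 => hg_un.of_uncurry_left
  -- Step 0 : the inner product-integral splits
  have hinner : ∀ x1 x2, ∫⁻ t, k1 x1 t.1 * k2 x2 t.2 * f t ∂(lam1.prod lam2)
      = ∫⁻ t1, k1 x1 t1 * g x2 t1 ∂lam1 := by
    intro x1 x2
    have hmeas : AEMeasurable (fun t : T1 × T2 => k1 x1 t.1 * k2 x2 t.2 * f t)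
        (lam1.prod lam2) := by
      exact (((hk1.comp (measurable_const.prodMk measurable_fst)).mul
        (hk2.comp (measurable_const.prodMk measurable_snd))).mul hf).aemeasurable
    rw [lintegral_prod _ hmeas]
    refine lintegral_congr fun t1 => ?_
    simp only [hgdef]
    have hmt2 : Measurable fun t2 => k2 x2 t2 * f (t1, t2) :=
      hk2.of_uncurry_left.mul (hf.comp measurable_prodMk_left)
    rw [← lintegral_const_mul _ hmt2]
    exact lintegral_congr fun t2 => by simp [mul_assoc]
  -- Step 1 : apply the bound for K1 pointwise in x2
  have h1 : ∀ x2, (∫⁻ x1, (∫⁻ t1, k1 x1 t1 * g x2 t1 ∂lam1) ^ r1 ∂mu1) ^ (r2 / r1)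
      ≤ (C1 * (∫⁻ t1, g x2 t1 ^ p1 ∂lam1) ^ (1 / p1)) ^ r2 := by
    intro x2
    have h := hK1 (g x2) (hg_left x2)
    calc (∫⁻ x1, (∫⁻ t1, k1 x1 t1 * g x2 t1 ∂lam1) ^ r1 ∂mu1) ^ (r2 / r1)
        = ((∫⁻ x1, (∫⁻ t1, k1 x1 t1 * g x2 t1 ∂lam1) ^ r1 ∂mu1) ^ (1 / r1)) ^ r2 := by
          rw [← ENNReal.rpow_mul]
          congr 1
          field_simp
      _ ≤ (C1 * (∫⁻ t1, g x2 t1 ^ p1 ∂lam1) ^ (1 / p1)) ^ r2 :=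
          ENNReal.rpow_le_rpow h hr2.le
  -- measurability facts
  have hmeasA : Measurable fun x2 => (∫⁻ t1, g x2 t1 ^ p1 ∂lam1) ^ s := by
    apply Measurable.pow_const
    exact Measurable.lintegral_prod_right (hg_un.pow_const p1)
  have hmeasX : Measurable fun t1 => (∫⁻ t2, f (t1, t2) ^ p2 ∂lam2) ^ (p1 / p2) := by
    apply Measurable.pow_const
    exact Measurable.lintegral_prod_right' (hf.pow_const p2)
  -- Minkowski
  have M := minkowski_lintegral mu2 lam1 (fun x2 t1 => g x2 t1 ^ p1)
      (hg_un.pow_const p1) hs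
  have hM : (∫⁻ x2, (∫⁻ t1, g x2 t1 ^ p1 ∂lam1) ^ s ∂mu2) ^ (1 / s)
      ≤ ∫⁻ t1, (∫⁻ x2, g x2 t1 ^ r2 ∂mu2) ^ (1 / s) ∂lam1 := by
    refine le_trans M (le_of_eq (lintegral_congr fun t1 => ?_))
    congr 1
    refine lintegral_congr fun x2 => ?_
    rw [← ENNReal.rpow_mul]
    congr 1
    rw [hsdef]; field_simp
  -- Step 3 : apply the bound for K2 pointwise in t1
  have hpt : ∀ t1, (∫⁻ x2, g x2 t1 ^ r2 ∂mu2) ^ (1 / s)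
      ≤ C2 ^ p1 * (∫⁻ t2, f (t1, t2) ^ p2 ∂lam2) ^ (p1 / p2) := by
    intro t1
    have h2 := hK2 (fun t2 => f (t1, t2)) (hf.comp measurable_prodMk_left)
    have hgly : ∀ x2, (∫⁻ t2, k2 x2 t2 * f (t1, t2) ∂lam2) = g x2 t1 := fun x2 => by
      rw [hgdef]
    simp_rw [hgly] at h2
    calc (∫⁻ x2, g x2 t1 ^ r2 ∂mu2) ^ (1 / s)
        = ((∫⁻ x2, g x2 t1 ^ r2 ∂mu2) ^ (1 / r2)) ^ p1 := by
          rw [← ENNReal.rpow_mul]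
          congr 1
          rw [hsdef]; field_simp
      _ ≤ (C2 * (∫⁻ t2, f (t1, t2) ^ p2 ∂lam2) ^ (1 / p2)) ^ p1 :=
          ENNReal.rpow_le_rpow h2 hp1.le
      _ = C2 ^ p1 * (∫⁻ t2, f (t1, t2) ^ p2 ∂lam2) ^ (p1 / p2) := by
          rw [ENNReal.mul_rpow_of_nonneg _ _ hp1.le, ← ENNReal.rpow_mul]
          congr 2
          ring
  -- put everything together
  calc (∫⁻ x2, (∫⁻ x1,
        (∫⁻ t, k1 x1 t.1 * k2 x2 t.2 * f t ∂(lam1.prod lam2)) ^ r1 ∂mu1) ^ (r2 / r1)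
      ∂mu2) ^ (1 / r2)
      = (∫⁻ x2, (∫⁻ x1,
          (∫⁻ t1, k1 x1 t1 * g x2 t1 ∂lam1) ^ r1 ∂mu1) ^ (r2 / r1) ∂mu2) ^ (1 / r2) := by
        congr 1
        refine lintegral_congr fun x2 => ?_
        congr 1
        refine lintegral_congr fun x1 => ?_
        rw [hinner]
    _ ≤ (∫⁻ x2, (C1 * (∫⁻ t1, g x2 t1 ^ p1 ∂lam1) ^ (1 / p1)) ^ r2 ∂mu2) ^ (1 / r2) :=
        ENNReal.rpow_le_rpow (lintegral_mono h1) (by positivity)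
    _ = C1 * (∫⁻ x2, (∫⁻ t1, g x2 t1 ^ p1 ∂lam1) ^ s ∂mu2) ^ (1 / r2) := by
        simp_rw [ENNReal.mul_rpow_of_nonneg _ _ hr2.le, ← ENNReal.rpow_mul,
          show 1 / p1 * r2 = s by rw [hsdef]; field_simp]
        rw [lintegral_const_mul _ hmeasA,
          ENNReal.mul_rpow_of_nonneg _ _ (by positivity : (0:ℝ) ≤ 1 / r2),
          ← ENNReal.rpow_mul, mul_one_div_cancel hr2.ne', ENNReal.rpow_one]
    _ ≤ C1 * (∫⁻ t1, (∫⁻ x2, g x2 t1 ^ r2 ∂mu2) ^ (1 / s) ∂lam1) ^ (1 / p1) := by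
        apply mul_le_mul_right
        have he : (1:ℝ) / r2 = 1 / s * (1 / p1) := by rw [hsdef]; field_simp
        rw [he, ENNReal.rpow_mul]
        exact ENNReal.rpow_le_rpow hM (by positivity)
    _ ≤ C1 * (C2 * (∫⁻ t1, (∫⁻ t2, f (t1, t2) ^ p2 ∂lam2) ^ (p1 / p2) ∂lam1) ^ (1 / p1)) := by
        apply mul_le_mul_right
        calc (∫⁻ t1, (∫⁻ x2, g x2 t1 ^ r2 ∂mu2) ^ (1 / s) ∂lam1) ^ (1 / p1)
            ≤ (∫⁻ t1, C2 ^ p1 * (∫⁻ t2, f (t1, t2) ^ p2 ∂lam2) ^ (p1 / p2) ∂lam1) ^ (1 / p1) :=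
              ENNReal.rpow_le_rpow (lintegral_mono hpt) (by positivity)
          _ = C2 * (∫⁻ t1, (∫⁻ t2, f (t1, t2) ^ p2 ∂lam2) ^ (p1 / p2) ∂lam1) ^ (1 / p1) := by
              rw [lintegral_const_mul _ hmeasX,
                ENNReal.mul_rpow_of_nonneg _ _ (by positivity : (0:ℝ) ≤ 1 / p1),
                ← ENNReal.rpow_mul, mul_one_div_cancel hp1.ne', ENNReal.rpow_one]
    _ = C1 * C2 * (∫⁻ t1, (∫⁻ t2, f (t1, t2) ^ p2 ∂lam2) ^ (p1 / p2) ∂lam1) ^ (1 / p1) :=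
        (mul_assoc _ _ _).symm
end

section
/- With the setup of a product operator $K$ with factor bounds $\|K_j g\|_{L^{r_j}}\le C_j\|g\|_{L^{p_j}}$: if $1\le r_1\le p_2$, then $\|Kf\|_{L^{(r_1,r_2)}_{\mu_1\times\mu_2}}\le C_1C_2\|f\|_{L^{(p_2,p_1)}_{\lambda_2\times\lambda_1}}$ for all nonnegative measurable $f$ on $T_1\times T_2$. -/
open MeasureTheory ENNReal

lemma measurable_rpow_const' {γ : Type*} [MeasurableSpace γ] {g : γ → ℝ≥0∞}
    (hg : Measurable g) (c : ℝ) : Measurable fun x => g x ^ c :=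
  ENNReal.continuous_rpow_const.measurable.comp hg

lemma iSup_min_natCast_rpow (a : ℝ≥0∞) {p : ℝ} (hp : 1 ≤ p) :
    ⨆ n : ℕ, min a (n : ℝ≥0∞) ^ p = a ^ p := by
  have hp0 : (0:ℝ) ≤ p := le_trans zero_le_one hp
  apply le_antisymm (iSup_le fun n => ENNReal.rpow_le_rpow (min_le_left _ _) hp0)
  rcases eq_or_ne a ⊤ with ha | ha
  · subst ha
    rw [ENNReal.top_rpow_of_pos (lt_of_lt_of_le one_pos hp)]
    refine le_trans (le_of_eq ENNReal.iSup_natCast.symm) (iSup_mono fun n => ?_)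
    simp only [min_eq_right (le_top : (n : ℝ≥0∞) ≤ ⊤)]
    rcases Nat.eq_zero_or_pos n with h0 | h0
    · simp [h0]
    · calc (n : ℝ≥0∞) = (n : ℝ≥0∞) ^ (1:ℝ) := (ENNReal.rpow_one _).symm
      _ ≤ (n : ℝ≥0∞) ^ p := ENNReal.rpow_le_rpow_of_exponent_le (by exact_mod_cast h0) hp
  · obtain ⟨n, hn⟩ := ENNReal.exists_nat_gt ha
    exact le_iSup_of_le n (by rw [min_eq_left hn.le])

theorem lintegral_minkowski {α β : Type*} [MeasurableSpace α] [MeasurableSpace β]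
    (μ : Measure α) (ν : Measure β) [SigmaFinite μ] [SigmaFinite ν]
    {p : ℝ} (hp : 1 ≤ p) {f : α → β → ℝ≥0∞}
    (hf : Measurable (Function.uncurry f)) :
    (∫⁻ x, (∫⁻ y, f x y ∂ν) ^ p ∂μ) ^ (1 / p)
      ≤ ∫⁻ y, (∫⁻ x, f x y ^ p ∂μ) ^ (1 / p) ∂ν := by
  have hF : Measurable fun x => ∫⁻ y, f x y ∂ν := hf.lintegral_prod_right'
  have hfx : ∀ y, Measurable fun x => f x y := fun y =>
    hf.comp (measurable_id.prodMk measurable_const)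
  have hfy : ∀ x, Measurable fun y => f x y := fun x =>
    hf.comp (measurable_const.prodMk measurable_id)
  set F : α → ℝ≥0∞ := fun x => ∫⁻ y, f x y ∂ν with hFdef
  set B : ℝ≥0∞ := ∫⁻ y, (∫⁻ x, f x y ^ p ∂μ) ^ (1 / p) ∂ν with hBdef
  rcases eq_or_lt_of_le hp with hp1 | hp1
  · subst hp1
    simp only [ENNReal.rpow_one, one_div_one, hBdef]
    exact le_of_eq (lintegral_lintegral_swap hf.aemeasurable)
  have hp0 : (0:ℝ) < p := lt_trans one_pos hp1
  suffices h : ∫⁻ x, F x ^ p ∂μ ≤ B ^ p by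
    calc (∫⁻ x, F x ^ p ∂μ) ^ (1/p) ≤ (B ^ p) ^ (1/p) :=
          ENNReal.rpow_le_rpow h (by positivity)
    _ = B := by rw [← ENNReal.rpow_mul, mul_one_div, div_self hp0.ne', ENNReal.rpow_one]
  set q : ℝ := p.conjExponent
  have hpq : p.HolderConjugate q := Real.HolderConjugate.conjExponent hp1
  have hq0 : (0:ℝ) < q := hpq.symm.pos
  set S : ℕ → Set α := spanningSets μ
  set G : ℕ → α → ℝ≥0∞ := fun n x => min (F x) n with hGdef
  have hG : ∀ n, Measurable (G n) := fun n => hF.min measurable_const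
  set A : ℕ → ℝ≥0∞ := fun n => ∫⁻ x in S n, G n x ^ p ∂μ with hAdef
  have hAtop : ∀ n, A n ≠ ⊤ := by
    intro n
    have h1 : A n ≤ (n : ℝ≥0∞) ^ p * μ (S n) := by
      rw [hAdef]
      calc ∫⁻ x in S n, G n x ^ p ∂μ ≤ ∫⁻ _ in S n, (n : ℝ≥0∞) ^ p ∂μ :=
            lintegral_mono fun x => ENNReal.rpow_le_rpow (min_le_right _ _) hp0.le
      _ = (n : ℝ≥0∞) ^ p * μ (S n) := by rw [setLIntegral_const]
    exact ne_top_of_le_ne_top (ENNReal.mul_lt_top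
      (ENNReal.rpow_lt_top_of_nonneg hp0.le (by simp)) (measure_spanningSets_lt_top μ n)).ne h1
  -- key estimate
  have key : ∀ n, A n ≤ A n ^ (1/q) * B := by
    intro n
    have step1 : A n ≤ ∫⁻ x in S n, G n x ^ (p-1) * F x ∂μ := by
      apply lintegral_mono fun x => ?_
      have he : G n x ^ p = G n x ^ (p-1) * G n x := by
        nth_rewrite 1 [show p = (p-1) + 1 by ring]
        rw [ENNReal.rpow_add_of_nonneg _ _ (by linarith) zero_le_one, ENNReal.rpow_one]
      rw [he]
      exact mul_le_mul_right (min_le_left _ _) _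
    have step2 : ∫⁻ x in S n, G n x ^ (p-1) * F x ∂μ
        = ∫⁻ y, ∫⁻ x in S n, G n x ^ (p-1) * f x y ∂μ ∂ν := by
      rw [show (∫⁻ x in S n, G n x ^ (p-1) * F x ∂μ)
          = ∫⁻ x in S n, ∫⁻ y, G n x ^ (p-1) * f x y ∂ν ∂μ from
        lintegral_congr fun x => (lintegral_const_mul _ (hfy x)).symm]
      exact lintegral_lintegral_swap
        ((((measurable_rpow_const' (hG n) (p-1)).comp measurable_fst).mul hf).aemeasurable)
    have step3 : ∀ y, ∫⁻ x in S n, G n x ^ (p-1) * f x y ∂μ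
        ≤ A n ^ (1/q) * (∫⁻ x, f x y ^ p ∂μ) ^ (1/p) := by
      intro y
      have hgq : (∫⁻ x in S n, (G n x ^ (p-1)) ^ q ∂μ) = A n := by
        rw [hAdef]
        exact lintegral_congr fun x => by
          rw [← ENNReal.rpow_mul, hpq.sub_one_mul_conj]
      calc ∫⁻ x in S n, G n x ^ (p-1) * f x y ∂μ
          ≤ (∫⁻ x in S n, (G n x ^ (p-1)) ^ q ∂μ) ^ (1/q)
            * (∫⁻ x in S n, f x y ^ p ∂μ) ^ (1/p) :=
            ENNReal.lintegral_mul_le_Lp_mul_Lq _ hpq.symm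
              ((measurable_rpow_const' (hG n) (p-1)).aemeasurable) ((hfx y).aemeasurable)
      _ ≤ A n ^ (1/q) * (∫⁻ x, f x y ^ p ∂μ) ^ (1/p) := by
          rw [hgq]
          gcongr
          exact Measure.restrict_le_self
    calc A n ≤ ∫⁻ y, ∫⁻ x in S n, G n x ^ (p-1) * f x y ∂μ ∂ν := step2 ▸ step1
    _ ≤ ∫⁻ y, A n ^ (1/q) * (∫⁻ x, f x y ^ p ∂μ) ^ (1/p) ∂ν := lintegral_mono step3
    _ = A n ^ (1/q) * B := by
        rw [hBdef, lintegral_const_mul]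
        exact measurable_rpow_const'
          ((Measurable.lintegral_prod_left'
            (measurable_rpow_const' hf p : Measurable fun z : α × β => f z.1 z.2 ^ p))) (1/p)
  -- from key : A n ≤ B ^ p
  have hAB : ∀ n, A n ≤ B ^ p := by
    intro n
    rcases eq_or_ne (A n) 0 with h0 | h0
    · simp [h0]
    have hmul := mul_le_mul_left (key n) (A n ^ (-(1/q)))
    have hc : A n ^ (1/q) * A n ^ (-(1/q)) = 1 := by
      rw [← ENNReal.rpow_add _ _ h0 (hAtop n)]; simp
    have hl : A n * A n ^ (-(1/q)) = A n ^ (1/p) := by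
      nth_rewrite 1 [← ENNReal.rpow_one (A n)]
      rw [← ENNReal.rpow_add _ _ h0 (hAtop n)]
      congr 1
      have := hpq.inv_add_inv_eq_inv
      simp only [one_div] at *
      linarith
    rw [hl, mul_right_comm, hc, one_mul] at hmul
    calc A n = (A n ^ (1/p)) ^ p := by
          rw [← ENNReal.rpow_mul, one_div_mul_cancel hp0.ne', ENNReal.rpow_one]
    _ ≤ B ^ p := ENNReal.rpow_le_rpow hmul hp0.le
  -- monotone convergence
  have hmono : Monotone fun n => (S n).indicator (fun x => G n x ^ p) := by
    intro m n hmn x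
    simp only
    by_cases hx : x ∈ S m
    · rw [Set.indicator_of_mem hx, Set.indicator_of_mem (monotone_spanningSets μ hmn hx)]
      exact ENNReal.rpow_le_rpow
        (min_le_min le_rfl (by exact_mod_cast Nat.cast_le.2 hmn)) hp0.le
    · rw [Set.indicator_of_notMem hx]; exact zero_le
  have hsup : ∫⁻ x, F x ^ p ∂μ = ⨆ n, A n := by
    have heq : ∀ x, F x ^ p = ⨆ n, (S n).indicator (fun x => G n x ^ p) x := by
      intro x
      obtain ⟨N, hN⟩ : ∃ N, x ∈ S N := by
        have hx : x ∈ ⋃ i, S i := by rw [hGdef] at *; rw [iUnion_spanningSets]; trivial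
        exact Set.mem_iUnion.1 hx
      apply le_antisymm
      · rw [← iSup_min_natCast_rpow (F x) hp]
        apply iSup_le fun m => ?_
        refine le_iSup_of_le (max m N) ?_
        rw [Set.indicator_of_mem (monotone_spanningSets μ (le_max_right m N) hN)]
        exact ENNReal.rpow_le_rpow
          (min_le_min le_rfl (by exact_mod_cast Nat.cast_le.2 (le_max_left m N))) hp0.le
      · apply iSup_le fun n => ?_
        by_cases hx : x ∈ S n
        · rw [Set.indicator_of_mem hx]
          exact ENNReal.rpow_le_rpow (min_le_left _ _) hp0.le
        · rw [Set.indicator_of_notMem hx]; exact zero_le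
    calc ∫⁻ x, F x ^ p ∂μ = ∫⁻ x, ⨆ n, (S n).indicator (fun x => G n x ^ p) x ∂μ :=
          lintegral_congr heq
    _ = ⨆ n, ∫⁻ x, (S n).indicator (fun x => G n x ^ p) x ∂μ :=
          lintegral_iSup (fun n => (measurable_rpow_const' (hG n) p).indicator
            (measurableSet_spanningSets μ n)) hmono
    _ = ⨆ n, A n := by
          refine iSup_congr fun n => ?_
          rw [lintegral_indicator (measurableSet_spanningSets μ n)]
  rw [hsup]
  exact iSup_le hAB

theorem product_operator_permuted_case_r1_le_p2
    {T1 T2 X1 X2 : Type*} [MeasurableSpace T1] [MeasurableSpace T2]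
    [MeasurableSpace X1] [MeasurableSpace X2]
    (lam1 : Measure T1) (lam2 : Measure T2) (mu1 : Measure X1) (mu2 : Measure X2)
    [SigmaFinite lam1] [SigmaFinite lam2] [SigmaFinite mu1] [SigmaFinite mu2]
    (k1 : X1 → T1 → ℝ≥0∞) (k2 : X2 → T2 → ℝ≥0∞)
    (hk1 : Measurable fun p : X1 × T1 => k1 p.1 p.2)
    (hk2 : Measurable fun p : X2 × T2 => k2 p.1 p.2)
    (p1 p2 r1 r2 : ℝ) (C1 C2 : ℝ≥0∞)
    (hp1 : 0 < p1) (hp2 : 0 < p2) (hr1 : 0 < r1) (hr2 : 0 < r2)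
    (hr1' : 1 ≤ r1) (hrp : r1 ≤ p2)
    (hK1 : ∀ g : T1 → ℝ≥0∞, Measurable g →
      (∫⁻ x, (∫⁻ t, k1 x t * g t ∂lam1) ^ r1 ∂mu1) ^ (1 / r1)
        ≤ C1 * (∫⁻ t, g t ^ p1 ∂lam1) ^ (1 / p1))
    (hK2 : ∀ g : T2 → ℝ≥0∞, Measurable g →
      (∫⁻ x, (∫⁻ t, k2 x t * g t ∂lam2) ^ r2 ∂mu2) ^ (1 / r2)
        ≤ C2 * (∫⁻ t, g t ^ p2 ∂lam2) ^ (1 / p2))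
    (f : T1 × T2 → ℝ≥0∞) (hf : Measurable f) :
    (∫⁻ x2, (∫⁻ x1,
        (∫⁻ t, k1 x1 t.1 * k2 x2 t.2 * f t ∂(lam1.prod lam2)) ^ r1 ∂mu1) ^ (r2 / r1)
      ∂mu2) ^ (1 / r2)
      ≤ C1 * C2 *
        (∫⁻ t1, (∫⁻ t2, f (t1, t2) ^ p2 ∂lam2) ^ (p1 / p2) ∂lam1) ^ (1 / p1) := by
  have hp2' : (1:ℝ) ≤ p2 := hr1'.trans hrp
  set H : X1 → T2 → ℝ≥0∞ := fun x1 t2 => ∫⁻ t1, k1 x1 t1 * f (t1, t2) ∂lam1 with hHdef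
  have hH : Measurable (Function.uncurry H) := by
    apply Measurable.lintegral_prod_right'
      (f := fun z : (X1 × T2) × T1 => k1 z.1.1 z.2 * f (z.2, z.1.2))
    exact (hk1.comp ((measurable_fst.comp measurable_fst).prodMk measurable_snd)).mul
      (hf.comp (measurable_snd.prodMk (measurable_snd.comp measurable_fst)))
  have hHx : ∀ t2, Measurable fun x1 => H x1 t2 := fun t2 =>
    hH.comp (measurable_id.prodMk measurable_const)
  set φ : T1 → ℝ≥0∞ := fun t1 => (∫⁻ t2, f (t1, t2) ^ p2 ∂lam2) ^ (1/p2) with hφdef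
  have hφ : Measurable φ :=
    measurable_rpow_const' ((measurable_rpow_const' hf p2).lintegral_prod_right') (1/p2)
  set ψ : T2 → ℝ≥0∞ := fun t2 => (∫⁻ x1, H x1 t2 ^ r1 ∂mu1) ^ (1/r1) with hψdef
  have hψ : Measurable ψ := by
    apply measurable_rpow_const' _ (1/r1)
    exact Measurable.lintegral_prod_left' (measurable_rpow_const' hH r1)
  -- Step A: rewrite the inner product integral
  have hrw : ∀ x1 x2, (∫⁻ t : T1 × T2, k1 x1 t.1 * k2 x2 t.2 * f t ∂(lam1.prod lam2))
      = ∫⁻ t2, k2 x2 t2 * H x1 t2 ∂lam2 := by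
    intro x1 x2
    have hm : Measurable fun t : T1 × T2 => k1 x1 t.1 * k2 x2 t.2 * f t :=
      ((hk1.comp (measurable_const.prodMk measurable_fst)).mul
        (hk2.comp (measurable_const.prodMk measurable_snd))).mul hf
    rw [MeasureTheory.lintegral_prod _ hm.aemeasurable,
      lintegral_lintegral_swap (f := fun t1 t2 => k1 x1 t1 * k2 x2 t2 * f (t1, t2))
        (by exact hm.aemeasurable)]
    refine lintegral_congr fun t2 => ?_
    have hmeas : Measurable fun t1 => k1 x1 t1 * f (t1, t2) := by
      apply Measurable.mul
      · exact hk1.comp (measurable_const.prodMk measurable_id)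
      · exact hf.comp (measurable_id.prodMk measurable_const)
    rw [show k2 x2 t2 * H x1 t2
        = ∫⁻ t1, k2 x2 t2 * (k1 x1 t1 * f (t1, t2)) ∂lam1 from
      (lintegral_const_mul _ hmeas).symm]
    exact lintegral_congr fun t1 => by ring
  -- Step B: Minkowski with exponent r1, for fixed x2
  have stepB : ∀ x2, (∫⁻ x1, (∫⁻ t2, k2 x2 t2 * H x1 t2 ∂lam2) ^ r1 ∂mu1) ^ (1/r1)
      ≤ ∫⁻ t2, k2 x2 t2 * ψ t2 ∂lam2 := by
    intro x2
    have hm : Measurable (Function.uncurry fun x1 t2 => k2 x2 t2 * H x1 t2) :=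
      (hk2.comp (measurable_const.prodMk measurable_snd)).mul hH
    refine (lintegral_minkowski mu1 lam2 hr1' hm).trans (le_of_eq ?_)
    refine lintegral_congr fun t2 => ?_
    rw [hψdef]
    have h1 : ∀ x1, (k2 x2 t2 * H x1 t2) ^ r1 = k2 x2 t2 ^ r1 * H x1 t2 ^ r1 := fun x1 =>
      ENNReal.mul_rpow_of_nonneg _ _ hr1.le
    simp only [h1]
    rw [lintegral_const_mul _ (measurable_rpow_const' (hHx t2) r1),
      ENNReal.mul_rpow_of_nonneg _ _ (by positivity : (0:ℝ) ≤ 1/r1),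
      ← ENNReal.rpow_mul, mul_one_div, div_self hr1.ne', ENNReal.rpow_one]
  -- Step C + D
  have stepCD : (∫⁻ x2, (∫⁻ x1,
        (∫⁻ t : T1 × T2, k1 x1 t.1 * k2 x2 t.2 * f t ∂(lam1.prod lam2)) ^ r1 ∂mu1) ^ (r2/r1)
      ∂mu2) ^ (1/r2) ≤ C2 * (∫⁻ t2, ψ t2 ^ p2 ∂lam2) ^ (1/p2) := by
    refine le_trans ?_ (hK2 ψ hψ)
    apply ENNReal.rpow_le_rpow _ (by positivity)
    refine lintegral_mono fun x2 => ?_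
    calc (∫⁻ x1, (∫⁻ t : T1 × T2,
            k1 x1 t.1 * k2 x2 t.2 * f t ∂(lam1.prod lam2)) ^ r1 ∂mu1) ^ (r2/r1)
        = ((∫⁻ x1, (∫⁻ t2, k2 x2 t2 * H x1 t2 ∂lam2) ^ r1 ∂mu1) ^ (1/r1)) ^ r2 := by
          rw [lintegral_congr (fun x1 => by rw [hrw x1 x2] :
            ∀ x1, (∫⁻ t : T1 × T2,
                k1 x1 t.1 * k2 x2 t.2 * f t ∂(lam1.prod lam2)) ^ r1
              = (∫⁻ t2, k2 x2 t2 * H x1 t2 ∂lam2) ^ r1),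
            ← ENNReal.rpow_mul, one_div_mul_eq_div]
    _ ≤ (∫⁻ t2, k2 x2 t2 * ψ t2 ∂lam2) ^ r2 := ENNReal.rpow_le_rpow (stepB x2) hr2.le
  -- Step E: mixed-norm swap with exponent s = p2 / r1
  set s : ℝ := p2 / r1 with hsdef
  have hs1 : (1:ℝ) ≤ s := (one_le_div hr1).2 hrp
  have stepE : (∫⁻ t2, ψ t2 ^ p2 ∂lam2) ^ (1/p2)
      ≤ (∫⁻ x1, (∫⁻ t2, H x1 t2 ^ p2 ∂lam2) ^ (r1/p2) ∂mu1) ^ (1/r1) := by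
    have hmink := lintegral_minkowski lam2 mu1 hs1
      (f := fun t2 x1 => H x1 t2 ^ r1)
      (by exact measurable_rpow_const' (hH.comp (measurable_snd.prodMk measurable_fst)) r1)
    have hψp : ∀ t2, ψ t2 ^ p2 = (∫⁻ x1, H x1 t2 ^ r1 ∂mu1) ^ s := fun t2 => by
      rw [hψdef, ← ENNReal.rpow_mul]
      congr 1
      rw [hsdef]
      field_simp
    have hexp : (1:ℝ)/p2 = (1/s) * (1/r1) := by
      rw [hsdef]
      field_simp
    calc (∫⁻ t2, ψ t2 ^ p2 ∂lam2) ^ (1/p2)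
        = ((∫⁻ t2, (∫⁻ x1, H x1 t2 ^ r1 ∂mu1) ^ s ∂lam2) ^ (1/s)) ^ (1/r1) := by
          rw [lintegral_congr hψp, hexp, ENNReal.rpow_mul]
    _ ≤ (∫⁻ x1, (∫⁻ t2, (H x1 t2 ^ r1) ^ s ∂lam2) ^ (1/s) ∂mu1) ^ (1/r1) :=
          ENNReal.rpow_le_rpow hmink (by positivity)
    _ = (∫⁻ x1, (∫⁻ t2, H x1 t2 ^ p2 ∂lam2) ^ (r1/p2) ∂mu1) ^ (1/r1) := by
          congr 1
          refine lintegral_congr fun x1 => ?_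
          rw [show (1:ℝ)/s = r1/p2 from by rw [hsdef]; exact one_div_div p2 r1]
          congr 1
          refine lintegral_congr fun t2 => ?_
          rw [← ENNReal.rpow_mul]
          congr 1
          rw [hsdef]
          field_simp
  -- Step F: pointwise Minkowski with exponent p2
  have stepF : ∀ x1, (∫⁻ t2, H x1 t2 ^ p2 ∂lam2) ^ (1/p2)
      ≤ ∫⁻ t1, k1 x1 t1 * φ t1 ∂lam1 := by
    intro x1
    have hmm : Measurable (Function.uncurry fun t2 t1 => k1 x1 t1 * f (t1, t2)) := by
      show Measurable fun z : T2 × T1 => k1 x1 z.2 * f (z.2, z.1)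
      apply Measurable.mul
      · exact hk1.comp (measurable_const.prodMk measurable_snd)
      · exact hf.comp (measurable_snd.prodMk measurable_fst)
    have hmink := lintegral_minkowski lam2 lam1 hp2' hmm
    refine hmink.trans (le_of_eq (lintegral_congr fun t1 => ?_))
    rw [hφdef]
    have h1 : ∀ t2, (k1 x1 t1 * f (t1, t2)) ^ p2 = k1 x1 t1 ^ p2 * f (t1, t2) ^ p2 :=
      fun t2 => ENNReal.mul_rpow_of_nonneg _ _ hp2.le
    simp only [h1]
    rw [lintegral_const_mul _ (show Measurable fun t2 : T2 => f (t1, t2) ^ p2 from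
        measurable_rpow_const' (hf.comp (measurable_const.prodMk measurable_id)) p2),
      ENNReal.mul_rpow_of_nonneg _ _ (by positivity : (0:ℝ) ≤ 1/p2),
      ← ENNReal.rpow_mul, mul_one_div, div_self hp2.ne', ENNReal.rpow_one]
  -- Step G: apply hK1
  have stepG : (∫⁻ x1, (∫⁻ t1, k1 x1 t1 * φ t1 ∂lam1) ^ r1 ∂mu1) ^ (1/r1)
      ≤ C1 * (∫⁻ t1, (∫⁻ t2, f (t1, t2) ^ p2 ∂lam2) ^ (p1/p2) ∂lam1) ^ (1/p1) := by
    refine (hK1 φ hφ).trans (le_of_eq ?_)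
    congr 2
    refine lintegral_congr fun t1 => ?_
    rw [hφdef, ← ENNReal.rpow_mul, one_div_mul_eq_div]
  -- Assemble
  calc (∫⁻ x2, (∫⁻ x1,
        (∫⁻ t : T1 × T2, k1 x1 t.1 * k2 x2 t.2 * f t ∂(lam1.prod lam2)) ^ r1 ∂mu1) ^ (r2/r1)
      ∂mu2) ^ (1/r2)
      ≤ C2 * (∫⁻ t2, ψ t2 ^ p2 ∂lam2) ^ (1/p2) := stepCD
  _ ≤ C2 * (∫⁻ x1, (∫⁻ t2, H x1 t2 ^ p2 ∂lam2) ^ (r1/p2) ∂mu1) ^ (1/r1) := by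
      exact mul_le_mul_right stepE _
  _ ≤ C2 * (∫⁻ x1, (∫⁻ t1, k1 x1 t1 * φ t1 ∂lam1) ^ r1 ∂mu1) ^ (1/r1) := by
      refine mul_le_mul_right (ENNReal.rpow_le_rpow (lintegral_mono fun x1 => ?_)
        (by positivity)) _
      calc (∫⁻ t2, H x1 t2 ^ p2 ∂lam2) ^ (r1/p2)
          = ((∫⁻ t2, H x1 t2 ^ p2 ∂lam2) ^ (1/p2)) ^ r1 := by
            rw [← ENNReal.rpow_mul, one_div_mul_eq_div]
      _ ≤ (∫⁻ t1, k1 x1 t1 * φ t1 ∂lam1) ^ r1 := ENNReal.rpow_le_rpow (stepF x1) hr1.le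
  _ ≤ C2 * (C1 * (∫⁻ t1, (∫⁻ t2, f (t1, t2) ^ p2 ∂lam2) ^ (p1/p2) ∂lam1) ^ (1/p1)) :=
      mul_le_mul_right stepG _
  _ = C1 * C2 * (∫⁻ t1, (∫⁻ t2, f (t1, t2) ^ p2 ∂lam2) ^ (p1/p2) ∂lam1) ^ (1/p1) := by
      ring
end

section
/- Let $P=(p_1,\dots,p_n)$, $Q=(q_1,\dots,q_n)$, $R=(r_1,\dots,r_n)$ with all entries in $[1,\infty)$ and $1/p_j+1/q_j=1/r_j+1$ for each $j$. Then for all nonnegative measurable $f,g:\mathbb{R}^n\to[0,\infty]$, $\|f*g\|_{L^R}\le\|f\|_{L^P}\|g\|_{L^Q}$, where $f*g(x)=\int_{\mathbb{R}^n}f(x-t)g(t)\,dt$ and $\|h\|_{L^P}=\left(\int_{\mathbb{R}}\cdots\left(\int_{\mathbb{R}}\left(\int_{\mathbb{R}}h(t_1,\dots,t_n)^{p_1}dt_1\right)^{p_2/p_1}dt_2\right)^{p_3/p_2}\cdots dt_n\right)^{1/p_n}$. -/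
open MeasureTheory ENNReal

/-- Minkowski's integral inequality for `ℝ≥0∞`-valued functions. -/
lemma minkowski_lintegral_s12 {α β : Type*} [MeasurableSpace α] [MeasurableSpace β]
    {μ : Measure α} {ν : Measure β} [SigmaFinite μ] [SigmaFinite ν]
    {F : α → β → ℝ≥0∞} (hF : Measurable (Function.uncurry F)) {p : ℝ} (hp : 1 ≤ p) :
    (∫⁻ x, (∫⁻ y, F x y ∂ν) ^ p ∂μ) ^ (1/p) ≤ ∫⁻ y, (∫⁻ x, (F x y) ^ p ∂μ) ^ (1/p) ∂ν := by
  have hp0 : 0 < p := lt_of_lt_of_le one_pos hp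
  rcases eq_or_lt_of_le hp with hp1 | hp1
  · subst hp1
    simp only [ENNReal.rpow_one, one_div_one]
    exact le_of_eq (lintegral_lintegral_swap hF.aemeasurable)
  -- now 1 < p
  set J := ∫⁻ y, (∫⁻ x, (F x y) ^ p ∂μ) ^ (1/p) ∂ν with hJ
  have hpq : (p / (p - 1)).HolderConjugate p :=
    (Real.HolderConjugate.conjExponent hp1).symm
  set I : α → ℝ≥0∞ := fun x => ∫⁻ y, F x y ∂ν with hIdef
  have hImeas : Measurable I := hF.lintegral_prod_right'
  set G : ℕ → α → ℝ≥0∞ := fun n x => (spanningSets μ n).indicator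
    (fun x => min (I x) n) x with hGdef
  have hGmeas : ∀ n, Measurable (G n) := fun n =>
    (hImeas.min measurable_const).indicator (measurableSet_spanningSets μ n)
  have hGle : ∀ n x, G n x ≤ I x := by
    intro n x
    refine (Set.indicator_le_self _ _ x).trans ?_
    exact min_le_left _ _
  have hGfin : ∀ n, ∫⁻ x, G n x ^ p ∂μ < ∞ := by
    intro n
    have hb : ∀ x, G n x ^ p ≤ (spanningSets μ n).indicator
        (fun _ => (n : ℝ≥0∞) ^ p) x := by
      intro x
      by_cases hx : x ∈ spanningSets μ n
      · simp only [hGdef, Set.indicator_of_mem hx]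
        exact ENNReal.rpow_le_rpow (min_le_right _ _) hp0.le
      · simp [hGdef, Set.indicator_of_notMem hx, ENNReal.zero_rpow_of_pos hp0]
    calc ∫⁻ x, G n x ^ p ∂μ
        ≤ ∫⁻ x, (spanningSets μ n).indicator (fun _ => (n : ℝ≥0∞) ^ p) x ∂μ :=
          lintegral_mono hb
      _ = (n : ℝ≥0∞) ^ p * μ (spanningSets μ n) := by
          rw [lintegral_indicator_const (measurableSet_spanningSets μ n)]
      _ < ∞ := ENNReal.mul_lt_top
          (ENNReal.rpow_lt_top_of_nonneg hp0.le (natCast_ne_top n))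
          (measure_spanningSets_lt_top μ n)
  -- the key estimate for each truncation
  have key : ∀ n, (∫⁻ x, G n x ^ p ∂μ) ^ (1/p) ≤ J := by
    intro n
    set C := ∫⁻ x, G n x ^ p ∂μ with hC
    have step : C ≤ C ^ (1/(p/(p-1))) * J := by
      have hinv : (0:ℝ) ≤ 1/(p/(p-1)) := hpq.one_div_nonneg
      have e1 : C = ∫⁻ x, G n x ^ (p - 1) * G n x ∂μ := by
        apply lintegral_congr; intro x
        calc G n x ^ p = G n x ^ ((p-1)+1) := by norm_num
          _ = G n x ^ (p-1) * G n x ^ (1:ℝ) :=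
              ENNReal.rpow_add_of_nonneg _ _ (by linarith) zero_le_one
          _ = G n x ^ (p-1) * G n x := by rw [ENNReal.rpow_one]
      have e2 : ∫⁻ x, G n x ^ (p - 1) * G n x ∂μ
          ≤ ∫⁻ x, ∫⁻ y, G n x ^ (p - 1) * F x y ∂ν ∂μ := by
        refine lintegral_mono fun x => ?_
        rw [lintegral_const_mul _ (hF.of_uncurry_left)]
        exact mul_le_mul_right (hGle n x) _
      have e3 : ∫⁻ x, ∫⁻ y, G n x ^ (p - 1) * F x y ∂ν ∂μ
          = ∫⁻ y, ∫⁻ x, G n x ^ (p - 1) * F x y ∂μ ∂ν := by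
        apply lintegral_lintegral_swap
        exact (((hGmeas n).pow_const _).comp measurable_fst).mul hF |>.aemeasurable
      have e4 : ∀ y, ∫⁻ x, G n x ^ (p - 1) * F x y ∂μ
          ≤ C ^ (1/(p/(p-1))) * (∫⁻ x, F x y ^ p ∂μ) ^ (1/p) := by
        intro y
        have hFy : Measurable (fun x => F x y) :=
          hF.comp (measurable_id.prodMk measurable_const)
        have h := ENNReal.lintegral_mul_le_Lp_mul_Lq μ hpq
          (f := fun x => G n x ^ (p-1)) (g := fun x => F x y)
          ((hGmeas n).pow_const (p-1)).aemeasurable hFy.aemeasurable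
        refine h.trans (le_of_eq ?_)
        congr 1
        congr 1
        apply lintegral_congr; intro x
        rw [← ENNReal.rpow_mul]
        congr 1
        have h1 : p - 1 ≠ 0 := by linarith
        field_simp
      calc C = ∫⁻ x, G n x ^ (p - 1) * G n x ∂μ := e1
        _ ≤ ∫⁻ y, ∫⁻ x, G n x ^ (p - 1) * F x y ∂μ ∂ν := e2.trans (le_of_eq e3)
        _ ≤ ∫⁻ y, C ^ (1/(p/(p-1))) * (∫⁻ x, F x y ^ p ∂μ) ^ (1/p) ∂ν :=
            lintegral_mono e4
        _ = C ^ (1/(p/(p-1))) * J := by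
            rw [lintegral_const_mul' _ _
              (ENNReal.rpow_ne_top_of_nonneg hinv (hGfin n).ne)]
    have hinv : (0:ℝ) ≤ 1/(p/(p-1)) := hpq.one_div_nonneg
    by_cases hC0 : C = 0
    · rw [hC0, ENNReal.zero_rpow_of_pos (one_div_pos.mpr hp0)]
      exact zero_le
    have hCtop : C ≠ ∞ := (hGfin n).ne
    have hpow0 : C ^ (1/(p/(p-1))) ≠ 0 := by
      simp [ENNReal.rpow_eq_zero_iff, hC0, hCtop]
    have hpowtop : C ^ (1/(p/(p-1))) ≠ ∞ :=
      ENNReal.rpow_ne_top_of_nonneg hinv hCtop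
    have hmul := mul_le_mul_left step (C ^ (1/(p/(p-1))))⁻¹
    rw [mul_comm (C ^ (1/(p/(p-1)))) J, mul_assoc,
      ENNReal.mul_inv_cancel hpow0 hpowtop, mul_one] at hmul
    refine le_trans (le_of_eq ?_) hmul
    have hexp : 1/p = 1 + -(1/(p/(p-1))) := by
      rw [one_div_div]
      have h1 : p ≠ 0 := hp0.ne'
      field_simp
      ring
    rw [hexp, ENNReal.rpow_add _ _ hC0 hCtop, ENNReal.rpow_one,
      ENNReal.rpow_neg]
  -- monotone convergence
  have hmono : Monotone G := by
    intro m n hmn x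
    simp only [hGdef]
    by_cases hx : x ∈ spanningSets μ m
    · rw [Set.indicator_of_mem hx, Set.indicator_of_mem
        (monotone_spanningSets μ hmn hx)]
      exact min_le_min le_rfl (Nat.cast_le.mpr hmn)
    · simp [Set.indicator_of_notMem hx]
  have hsup : ∀ x, (⨆ n, G n x) = I x := by
    intro x
    refine le_antisymm (iSup_le fun n => hGle n x) ?_
    refine le_of_forall_lt fun c hc => ?_
    obtain ⟨k, hk⟩ := ENNReal.exists_nat_gt hc.ne_top
    have hxu : x ∈ ⋃ n, spanningSets μ n := by
      rw [iUnion_spanningSets]; trivial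
    obtain ⟨N, hN⟩ := Set.mem_iUnion.mp hxu
    refine lt_of_lt_of_le ?_ (le_iSup (fun n => G n x) (max k N))
    have hxm : x ∈ spanningSets μ (max k N) :=
      monotone_spanningSets μ (le_max_right k N) hN
    rw [hGdef]
    simp only [Set.indicator_of_mem hxm]
    exact lt_min hc (hk.trans_le (Nat.cast_le.mpr (le_max_left k N)))
  have hIp : ∫⁻ x, I x ^ p ∂μ = ⨆ n, ∫⁻ x, G n x ^ p ∂μ := by
    rw [← lintegral_iSup (fun n => (hGmeas n).pow_const p)
      (fun m n hmn x => ENNReal.rpow_le_rpow (hmono hmn x) hp0.le)]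
    apply lintegral_congr; intro x
    rw [← hsup x]
    refine Monotone.map_iSup_of_continuousAt (f := fun z : ℝ≥0∞ => z ^ p) ?_ ?_ ?_
    · exact ENNReal.continuous_rpow_const.continuousAt
    · exact fun a b hab => ENNReal.rpow_le_rpow hab hp0.le
    · exact ENNReal.zero_rpow_of_pos hp0
  rw [hIp]
  have : (⨆ n, ∫⁻ x, G n x ^ p ∂μ) ≤ J ^ p := by
    refine iSup_le fun n => ?_
    have := ENNReal.rpow_le_rpow (key n) hp0.le
    rwa [← ENNReal.rpow_mul, one_div, inv_mul_cancel₀ hp0.ne', ENNReal.rpow_one]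
      at this
  refine le_trans (ENNReal.rpow_le_rpow this (by positivity)) (le_of_eq ?_)
  rw [← ENNReal.rpow_mul, mul_one_div, div_self hp0.ne', ENNReal.rpow_one]


lemma aux_lintegral_sub_left (f : ℝ → ℝ≥0∞) (x : ℝ) :
    ∫⁻ t, f (x - t) = ∫⁻ t, f t := by
  have h1 : ∫⁻ t, f (x - t) = ∫⁻ t, f (x + t) := by
    have := lintegral_map_equiv (μ := (volume : Measure ℝ))
      (fun u => f (x + u)) (MeasurableEquiv.neg ℝ)
    rw [show ⇑(MeasurableEquiv.neg ℝ) = (Neg.neg : ℝ → ℝ) from rfl,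
      Measure.map_neg_eq_self (volume : Measure ℝ)] at this
    simp_rw [sub_eq_add_neg]
    exact this.symm
  rw [h1, lintegral_add_left_eq_self f x]

lemma young_one_dim {p q r : ℝ} (hp : 1 ≤ p) (hq : 1 ≤ q) (hr : 1 ≤ r)
    (hpqr : 1/p + 1/q = 1/r + 1) (f g : ℝ → ℝ≥0∞)
    (hf : Measurable f) (hg : Measurable g) :
    (∫⁻ x, (∫⁻ t, f (x - t) * g t) ^ r) ^ (1/r)
      ≤ (∫⁻ x, f x ^ p) ^ (1/p) * (∫⁻ x, g x ^ q) ^ (1/q) := by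
  have hp0 : 0 < p := lt_of_lt_of_le one_pos hp
  have hq0 : 0 < q := lt_of_lt_of_le one_pos hq
  have hr0 : 0 < r := lt_of_lt_of_le one_pos hr
  set a : ℝ := 1/p - 1/r with ha
  set b : ℝ := 1/q - 1/r with hb
  have ha0 : 0 ≤ a := by
    have h1 : 1/q ≤ 1 := by
      rw [div_le_one hq0]; exact hq
    rw [ha]; rw [sub_nonneg]
    have : 1/r = 1/p + 1/q - 1 := by linarith
    rw [this]; linarith
  have hb0 : 0 ≤ b := by
    have h1 : 1/p ≤ 1 := by
      rw [div_le_one hp0]; exact hp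
    rw [hb, sub_nonneg]
    have : 1/r = 1/p + 1/q - 1 := by linarith
    rw [this]; linarith
  have hsum : 1/r + a + b = 1 := by rw [ha, hb]; linarith
  set A := ∫⁻ x, f x ^ p with hA
  set B := ∫⁻ x, g x ^ q with hB
  set K : ℝ → ℝ≥0∞ := fun x => ∫⁻ t, f (x - t) ^ p * g t ^ q with hK
  -- pointwise Hölder bound on the convolution
  have pointwise : ∀ x, (∫⁻ t, f (x - t) * g t) ≤ K x ^ (1/r) * (A ^ a * B ^ b) := by
    intro x
    have hfx : Measurable fun t => f (x - t) :=
      hf.comp (measurable_const.sub measurable_id)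
    have key : ∀ t, f (x - t) * g t =
        (f (x - t) ^ p * g t ^ q) ^ (1/r) * (f (x - t) ^ p) ^ a * (g t ^ q) ^ b := by
      intro t
      have hr' : (0:ℝ) ≤ 1/r := (one_div_pos.mpr hr0).le
      have habs : ∀ (u v : ℝ≥0∞), (u^p * v^q)^(1/r) * (u^p)^a * (v^q)^b
          = u^(p*(1/r) + p*a) * v^(q*(1/r) + q*b) := by
        intro u v
        rw [ENNReal.mul_rpow_of_nonneg _ _ hr', ← ENNReal.rpow_mul, ← ENNReal.rpow_mul,
          ← ENNReal.rpow_mul, ← ENNReal.rpow_mul,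
          ENNReal.rpow_add_of_nonneg _ _ (mul_nonneg hp0.le hr') (mul_nonneg hp0.le ha0),
          ENNReal.rpow_add_of_nonneg _ _ (mul_nonneg hq0.le hr') (mul_nonneg hq0.le hb0)]
        ring
      rw [habs]
      have e1 : p * (1/r) + p * a = 1 := by
        rw [ha]; field_simp; ring
      have e2 : q * (1/r) + q * b = 1 := by
        rw [hb]; field_simp; ring
      rw [e1, e2, ENNReal.rpow_one, ENNReal.rpow_one]
    calc (∫⁻ t, f (x - t) * g t)
        = ∫⁻ t, (f (x - t) ^ p * g t ^ q) ^ (1/r) * (f (x - t) ^ p) ^ a * (g t ^ q) ^ b :=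
          lintegral_congr key
      _ ≤ (∫⁻ t, f (x - t) ^ p * g t ^ q) ^ (1/r) *
            ((∫⁻ t, f (x - t) ^ p) ^ a * (∫⁻ t, g t ^ q) ^ b) := by
          have h3 := ENNReal.lintegral_prod_norm_pow_le (Finset.univ : Finset (Fin 3))
            (f := ![fun t => f (x - t) ^ p * g t ^ q, fun t => f (x - t) ^ p,
              fun t => g t ^ q])
            (p := ![1/r, a, b]) (μ := volume)
            (by
              intro i _
              fin_cases i
              · exact ((hfx.pow_const p).mul (hg.pow_const q)).aemeasurable
              · exact (hfx.pow_const p).aemeasurable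
              · exact (hg.pow_const q).aemeasurable)
            (by simp only [Fin.sum_univ_three, Matrix.cons_val_zero, Matrix.cons_val_one,
                  Matrix.head_cons, Matrix.cons_val_two, Matrix.tail_cons]; linarith)
            (by
              intro i _
              fin_cases i
              · exact (one_div_pos.mpr hr0).le
              · exact ha0
              · exact hb0)
          simp only [Fin.prod_univ_three] at h3
          simp only [Matrix.cons_val_zero, Matrix.cons_val_one, Matrix.head_cons,
            Matrix.cons_val_two, Matrix.tail_cons] at h3
          calc ∫⁻ t, (f (x - t) ^ p * g t ^ q) ^ (1/r) * (f (x - t) ^ p) ^ a * (g t ^ q) ^ b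
              ≤ (∫⁻ t, f (x - t) ^ p * g t ^ q) ^ (1/r) *
                (∫⁻ t, f (x - t) ^ p) ^ a * (∫⁻ t, g t ^ q) ^ b := h3
            _ = _ := by ring
      _ = (∫⁻ t, f (x - t) ^ p * g t ^ q) ^ (1/r) * (A ^ a * B ^ b) := by
          rw [aux_lintegral_sub_left (fun u => f u ^ p) x]
  -- integrate the r-th power
  have hKint : ∫⁻ x, K x = B * A := by
    rw [hK]
    rw [lintegral_lintegral_swap]
    · have : ∀ t, ∫⁻ x, f (x - t) ^ p * g t ^ q = A * g t ^ q := by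
        intro t
        rw [lintegral_mul_const _ (by
          exact (hf.comp (measurable_id.sub measurable_const)).pow_const p)]
        congr 1
        exact lintegral_sub_right_eq_self (fun u => f u ^ p) t
      simp_rw [this]
      rw [lintegral_const_mul _ (hg.pow_const q)]
      ring
    · apply Measurable.aemeasurable
      apply Measurable.mul
      · exact ((hf.comp (measurable_fst.sub measurable_snd)).pow_const p)
      · exact ((hg.comp measurable_snd).pow_const q)
  have hr' : (0:ℝ) ≤ 1/r := (one_div_pos.mpr hr0).le
  have hKmeas : Measurable K := by
    rw [hK]
    have hm : Measurable fun z : ℝ × ℝ => f (z.1 - z.2) ^ p * g z.2 ^ q :=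
      ((hf.comp (measurable_fst.sub measurable_snd)).pow_const p).mul
        ((hg.comp measurable_snd).pow_const q)
    exact hm.lintegral_prod_right'
  have step : ∫⁻ x, (∫⁻ t, f (x - t) * g t) ^ r ≤ (A ^ a * B ^ b) ^ r * (B * A) := by
    calc ∫⁻ x, (∫⁻ t, f (x - t) * g t) ^ r
        ≤ ∫⁻ x, (K x ^ (1/r) * (A ^ a * B ^ b)) ^ r :=
          lintegral_mono fun x => ENNReal.rpow_le_rpow (pointwise x) hr0.le
      _ = ∫⁻ x, K x * (A ^ a * B ^ b) ^ r := by
          apply lintegral_congr; intro x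
          rw [ENNReal.mul_rpow_of_nonneg _ _ hr0.le, ← ENNReal.rpow_mul,
            one_div, inv_mul_cancel₀ hr0.ne', ENNReal.rpow_one]
      _ = (∫⁻ x, K x) * (A ^ a * B ^ b) ^ r := lintegral_mul_const _ hKmeas
      _ = (A ^ a * B ^ b) ^ r * (B * A) := by rw [hKint]; ring
  calc (∫⁻ x, (∫⁻ t, f (x - t) * g t) ^ r) ^ (1/r)
      ≤ ((A ^ a * B ^ b) ^ r * (B * A)) ^ (1/r) := ENNReal.rpow_le_rpow step hr'
    _ = (A ^ a * B ^ b) * (B ^ (1/r) * A ^ (1/r)) := by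
        rw [ENNReal.mul_rpow_of_nonneg _ _ hr', ENNReal.mul_rpow_of_nonneg _ _ hr',
          ← ENNReal.rpow_mul, mul_one_div, div_self hr0.ne', ENNReal.rpow_one]
    _ = A ^ (a + 1/r) * B ^ (b + 1/r) := by
        rw [ENNReal.rpow_add_of_nonneg _ _ ha0 hr', ENNReal.rpow_add_of_nonneg _ _ hb0 hr']
        ring
    _ = A ^ (1/p) * B ^ (1/q) := by
        rw [ha, hb]; ring_nf

/-- The iterated mixed Lebesgue norm on `ℝ^n`: integrate first in the coordinate `t₁`
with exponent `P 0`, then in `t₂` with exponent `P 1`, and so on. -/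
noncomputable def mixedLNorm : (n : ℕ) → (Fin n → ℝ) → ((Fin n → ℝ) → ℝ≥0∞) → ℝ≥0∞
  | 0, _, h => h (fun i => i.elim0)
  | n + 1, P, h =>
      mixedLNorm n (fun i => P i.succ)
        (fun v => (∫⁻ t : ℝ, h (Fin.cons t v) ^ P 0) ^ (1 / P 0))

lemma measurable_fin_cons {n : ℕ} :
    Measurable (fun p : ℝ × (Fin n → ℝ) => (Fin.cons p.1 p.2 : Fin (n+1) → ℝ)) := by
  rw [measurable_pi_iff]
  intro i
  refine Fin.cases ?_ ?_ i
  · simpa using measurable_fst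
  · intro j
    simpa [Function.comp_def] using (measurable_pi_apply j).comp measurable_snd

lemma fin_cons_sub {n : ℕ} (a b : ℝ) (u w : Fin n → ℝ) :
    (Fin.cons a u - Fin.cons b w : Fin (n+1) → ℝ) = Fin.cons (a - b) (u - w) := by
  funext i
  refine Fin.cases ?_ ?_ i <;> simp

lemma lintegral_fin_succ {n : ℕ} (φ : (Fin (n+1) → ℝ) → ℝ≥0∞) (hφ : Measurable φ) :
    ∫⁻ t, φ t = ∫⁻ w : Fin n → ℝ, ∫⁻ c : ℝ, φ (Fin.cons c w) := by
  have hmp := volume_preserving_piFinSuccAbove (fun _ : Fin (n+1) => ℝ) 0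
  set e := MeasurableEquiv.piFinSuccAbove (fun _ : Fin (n+1) => ℝ) 0 with he
  set ψ : ℝ × (Fin n → ℝ) → ℝ≥0∞ := fun z => φ (Fin.cons z.1 z.2) with hψ
  have hψm : Measurable ψ := hφ.comp measurable_fin_cons
  have hid : ∀ t : Fin (n+1) → ℝ, ψ (e t) = φ t := by
    intro t
    rw [hψ, he]
    simp only [MeasurableEquiv.piFinSuccAbove_apply]
    congr 1
    funext i
    refine Fin.cases ?_ ?_ i
    · simp
    · intro j
      simp [Fin.succAbove, Fin.tail]
  calc ∫⁻ t, φ t = ∫⁻ t, ψ (e t) := lintegral_congr fun t => (hid t).symm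
    _ = ∫⁻ z : ℝ × (Fin n → ℝ), ψ z := hmp.lintegral_comp hψm
    _ = ∫⁻ w : Fin n → ℝ, ∫⁻ c : ℝ, ψ (c, w) := by
        rw [Measure.volume_eq_prod]
        exact lintegral_prod_symm ψ hψm.aemeasurable
    _ = ∫⁻ w : Fin n → ℝ, ∫⁻ c : ℝ, φ (Fin.cons c w) := rfl

lemma mixedLNorm_mono (n : ℕ) (P : Fin n → ℝ) (hP : ∀ j, 0 ≤ P j)
    (h₁ h₂ : (Fin n → ℝ) → ℝ≥0∞) (hle : ∀ x, h₁ x ≤ h₂ x) :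
    mixedLNorm n P h₁ ≤ mixedLNorm n P h₂ := by
  induction n with
  | zero => exact hle _
  | succ n ih =>
    rw [mixedLNorm, mixedLNorm]
    refine ih (fun i => P i.succ) (fun j => hP j.succ) _ _ fun v => ?_
    refine ENNReal.rpow_le_rpow (lintegral_mono fun t => ?_)
      (one_div_nonneg.mpr (hP 0))
    exact ENNReal.rpow_le_rpow (hle _) (hP 0)

/-- The `n`-variable mixed-norm Young inequality for nonnegative functions. -/
theorem mixed_norm_young
    (n : ℕ) (P Q R : Fin n → ℝ)
    (hP : ∀ j, 1 ≤ P j) (hQ : ∀ j, 1 ≤ Q j) (hR : ∀ j, 1 ≤ R j)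
    (hPQR : ∀ j, 1 / P j + 1 / Q j = 1 / R j + 1)
    (f g : (Fin n → ℝ) → ℝ≥0∞) (hf : Measurable f) (hg : Measurable g) :
    mixedLNorm n R (fun x => ∫⁻ t, f (x - t) * g t)
      ≤ mixedLNorm n P f * mixedLNorm n Q g := by
  induction n with
  | zero =>
    rw [mixedLNorm, mixedLNorm, mixedLNorm]
    have e0 : ∀ t : Fin 0 → ℝ, t = (fun i => i.elim0) := fun t => Subsingleton.elim _ _
    refine le_of_eq ?_
    calc (∫⁻ t, f ((fun i => (i : Fin 0).elim0) - t) * g t)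
        = ∫⁻ _t : Fin 0 → ℝ,
            f (fun i => i.elim0) * g (fun i => i.elim0) := by
          apply lintegral_congr; intro t
          rw [e0 ((fun i => (i : Fin 0).elim0) - t)]
          congr 1
          rw [e0 t]
      _ = f (fun i => i.elim0) * g (fun i => i.elim0) := by
          rw [lintegral_const]
          have : (volume : Measure (Fin 0 → ℝ)) Set.univ = 1 := by
            rw [MeasureTheory.volume_pi, Measure.pi_univ]
            simp
          rw [this, mul_one]
  | succ n ih =>
    set F : (Fin n → ℝ) → ℝ≥0∞ :=
      fun u => (∫⁻ s : ℝ, f (Fin.cons s u) ^ P 0) ^ (1 / P 0) with hF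
    set G : (Fin n → ℝ) → ℝ≥0∞ :=
      fun u => (∫⁻ s : ℝ, g (Fin.cons s u) ^ Q 0) ^ (1 / Q 0) with hG
    have hFmeas : Measurable F := by
      rw [hF]
      apply Measurable.pow_const
      exact Measurable.lintegral_prod_left'
        (f := fun z : ℝ × (Fin n → ℝ) => f (Fin.cons z.1 z.2) ^ P 0)
        ((hf.comp measurable_fin_cons).pow_const _)
    have hGmeas : Measurable G := by
      rw [hG]
      apply Measurable.pow_const
      exact Measurable.lintegral_prod_left'
        (f := fun z : ℝ × (Fin n → ℝ) => g (Fin.cons z.1 z.2) ^ Q 0)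
        ((hg.comp measurable_fin_cons).pow_const _)
    have key : ∀ v : Fin n → ℝ,
        (∫⁻ s : ℝ, (∫⁻ t, f (Fin.cons s v - t) * g t) ^ R 0) ^ (1 / R 0)
          ≤ ∫⁻ w : Fin n → ℝ, F (v - w) * G w := by
      intro v
      have hconv : ∀ s : ℝ, (∫⁻ t, f (Fin.cons s v - t) * g t)
          = ∫⁻ w : Fin n → ℝ, ∫⁻ c : ℝ,
              f (Fin.cons (s - c) (v - w)) * g (Fin.cons c w) := by
        intro s
        have hstep := lintegral_fin_succ (fun t => f (Fin.cons s v - t) * g t)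
          (by exact (hf.comp (measurable_const.sub measurable_id)).mul hg)
        rw [hstep]
        apply lintegral_congr; intro w
        apply lintegral_congr; intro c
        rw [fin_cons_sub]
      have hHm : Measurable (Function.uncurry
          (fun (s : ℝ) (w : Fin n → ℝ) => ∫⁻ c : ℝ,
            f (Fin.cons (s - c) (v - w)) * g (Fin.cons c w))) := by
        apply Measurable.lintegral_prod_right'
          (f := fun zc : (ℝ × (Fin n → ℝ)) × ℝ =>
            f (Fin.cons (zc.1.1 - zc.2) (v - zc.1.2)) * g (Fin.cons zc.2 zc.1.2))
        apply Measurable.mul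
        · exact hf.comp (measurable_fin_cons.comp
            (((measurable_fst.comp measurable_fst).sub measurable_snd).prodMk
              (measurable_const.sub (measurable_snd.comp measurable_fst))))
        · exact hg.comp (measurable_fin_cons.comp
            (measurable_snd.prodMk (measurable_snd.comp measurable_fst)))
      calc (∫⁻ s : ℝ, (∫⁻ t, f (Fin.cons s v - t) * g t) ^ R 0) ^ (1 / R 0)
          = (∫⁻ s : ℝ, (∫⁻ w : Fin n → ℝ, ∫⁻ c : ℝ,
              f (Fin.cons (s - c) (v - w)) * g (Fin.cons c w)) ^ R 0) ^ (1 / R 0) := by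
            congr 1
            apply lintegral_congr; intro s
            rw [hconv s]
        _ ≤ ∫⁻ w : Fin n → ℝ, (∫⁻ s : ℝ, (∫⁻ c : ℝ,
              f (Fin.cons (s - c) (v - w)) * g (Fin.cons c w)) ^ R 0) ^ (1 / R 0) :=
            minkowski_lintegral_s12 hHm (hR 0)
        _ ≤ ∫⁻ w : Fin n → ℝ, F (v - w) * G w := by
            refine lintegral_mono fun w => ?_
            have hy := young_one_dim (hP 0) (hQ 0) (hR 0) (hPQR 0)
              (fun s => f (Fin.cons s (v - w))) (fun c => g (Fin.cons c w))
              (hf.comp (measurable_fin_cons.comp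
                (measurable_id.prodMk measurable_const)))
              (hg.comp (measurable_fin_cons.comp
                (measurable_id.prodMk measurable_const)))
            exact hy
    calc mixedLNorm (n+1) R (fun x => ∫⁻ t, f (x - t) * g t)
        = mixedLNorm n (fun i => R i.succ)
            (fun v => (∫⁻ s : ℝ, (∫⁻ t, f (Fin.cons s v - t) * g t) ^ R 0)
              ^ (1 / R 0)) := by rw [mixedLNorm]
      _ ≤ mixedLNorm n (fun i => R i.succ)
            (fun v => ∫⁻ w : Fin n → ℝ, F (v - w) * G w) :=
          mixedLNorm_mono n _ (fun j => zero_le_one.trans (hR j.succ)) _ _ key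
      _ ≤ mixedLNorm n (fun i => P i.succ) F * mixedLNorm n (fun i => Q i.succ) G :=
          ih (fun i => P i.succ) (fun i => Q i.succ) (fun i => R i.succ)
            (fun j => hP j.succ) (fun j => hQ j.succ) (fun j => hR j.succ)
            (fun j => hPQR j.succ) F G hFmeas hGmeas
      _ = mixedLNorm (n+1) P f * mixedLNorm (n+1) Q g := by
          rw [hF, hG]; simp only [mixedLNorm]
end
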